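/- Let v ∈ ℝ^d with v ≠ 0, and let P_1, P_2 ⊆ ℝ^d be finite sets with v ∈ pos(P_1) and −v ∈ pos(P_2). Let π : ℝ^d → ℝ^d be the orthogonal projection onto the hyperplane {x ∈ ℝ^d : ⟨x, v⟩ = 0}, and let Q ⊆ ℝ^d be a finite set with 0 ∈ conv(π(Q)). Then 0 ∈ conv(Q ∪ P_1) or 0 ∈ conv(Q ∪ P_2). -/

import Mathlib

/-- `posCone P` is the set of all nonnegative linear combinations of the
points of the finite set `P`. -/
def posCone {d : ℕ} (P : Finset (EuclideanSpace ℝ (Fin d))) :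
    Set (EuclideanSpace ℝ (Fin d)) :=
  {x | ∃ μ : EuclideanSpace ℝ (Fin d) → ℝ,
    (∀ p ∈ P, 0 ≤ μ p) ∧ x = ∑ p ∈ P, μ p • p}

private lemma aux_combine {d : ℕ} (Q P : Finset (EuclideanSpace ℝ (Fin d)))
    {x w : EuclideanSpace ℝ (Fin d)} {r : ℝ} (hr : 0 ≤ r)
    (hx : x ∈ convexHull ℝ (Q : Set (EuclideanSpace ℝ (Fin d))))
    (hw : w ∈ posCone P) (h : x + r • w = 0) :
    (0 : EuclideanSpace ℝ (Fin d)) ∈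
      convexHull ℝ ((Q : Set (EuclideanSpace ℝ (Fin d))) ∪
        (P : Set (EuclideanSpace ℝ (Fin d)))) := by
  obtain ⟨μ, hμ0, hμ⟩ := hw
  have hrw : r • w = ∑ p ∈ P, (r * μ p) • p := by
    rw [hμ, Finset.smul_sum]
    simp [mul_smul]
  set c : ℝ := ∑ p ∈ P, r * μ p with hc
  have hterm : ∀ p ∈ P, 0 ≤ r * μ p := fun p hp => mul_nonneg hr (hμ0 p hp)
  have hc0 : 0 ≤ c := Finset.sum_nonneg hterm
  rcases hc0.eq_or_lt with hc' | hc'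
  · -- all coefficients are zero, so `r • w = 0` and `x = 0`
    have hzero : ∀ p ∈ P, r * μ p = 0 :=
      (Finset.sum_eq_zero_iff_of_nonneg hterm).1 hc'.symm
    have hrw0 : r • w = 0 := by
      rw [hrw]
      exact Finset.sum_eq_zero fun p hp => by rw [hzero p hp, zero_smul]
    have hx0 : x = 0 := by
      have := h
      rw [hrw0, add_zero] at this
      exact this
    exact convexHull_mono Set.subset_union_left (hx0 ▸ hx)
  · have hcne : c ≠ 0 := ne_of_gt hc'
    have hy : c⁻¹ • (r • w) ∈ convexHull ℝ (P : Set (EuclideanSpace ℝ (Fin d))) := by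
      rw [Finset.mem_convexHull']
      refine ⟨fun p => c⁻¹ * (r * μ p), fun p hp => mul_nonneg (by positivity) (hterm p hp),
        ?_, ?_⟩
      · rw [← Finset.mul_sum, ← hc, inv_mul_cancel₀ hcne]
      · rw [hrw, Finset.smul_sum]
        exact Finset.sum_congr rfl fun p hp => by rw [mul_smul]
    have hxQ : x ∈ convexHull ℝ ((Q : Set (EuclideanSpace ℝ (Fin d))) ∪ P) :=
      convexHull_mono Set.subset_union_left hx
    have hyP : c⁻¹ • (r • w) ∈ convexHull ℝ ((Q : Set (EuclideanSpace ℝ (Fin d))) ∪ P) :=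
      convexHull_mono Set.subset_union_right hy
    have h1c : (0:ℝ) < 1 + c := by linarith
    have hmem := (convex_convexHull ℝ ((Q : Set (EuclideanSpace ℝ (Fin d))) ∪ P)) hxQ hyP
      (a := (1 + c)⁻¹) (b := c * (1 + c)⁻¹) (by positivity)
      (by positivity) (by field_simp)
    have : (1 + c)⁻¹ • x + (c * (1 + c)⁻¹) • (c⁻¹ • (r • w)) = 0 := by
      rw [smul_smul]
      have : c * (1 + c)⁻¹ * c⁻¹ = (1 + c)⁻¹ := by field_simp
      rw [this, ← smul_add, h, smul_zero]
    rwa [this] at hmem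

/-- Let `v ≠ 0` with `v ∈ pos P₁` and `-v ∈ pos P₂`, and let `Q` be a finite
set whose orthogonal projection onto the hyperplane orthogonal to `v`
contains the origin in its convex hull. Then `0 ∈ conv (Q ∪ P₁)` or
`0 ∈ conv (Q ∪ P₂)`. -/
theorem combine_with_one_side (d : ℕ) (v : EuclideanSpace ℝ (Fin d)) (hv : v ≠ 0)
    (P₁ P₂ : Finset (EuclideanSpace ℝ (Fin d)))
    (hv₁ : v ∈ posCone P₁) (hv₂ : -v ∈ posCone P₂)
    (Q : Finset (EuclideanSpace ℝ (Fin d)))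
    (hQ : (0 : EuclideanSpace ℝ (Fin d)) ∈
      convexHull ℝ ((fun x : EuclideanSpace ℝ (Fin d) =>
          ((Submodule.orthogonalProjectionOnto ((Submodule.span ℝ {v})ᗮ) x :
            EuclideanSpace ℝ (Fin d)))) '' (Q : Set (EuclideanSpace ℝ (Fin d))))) :
    (0 : EuclideanSpace ℝ (Fin d)) ∈
        convexHull ℝ ((Q : Set (EuclideanSpace ℝ (Fin d))) ∪
          (P₁ : Set (EuclideanSpace ℝ (Fin d)))) ∨
      (0 : EuclideanSpace ℝ (Fin d)) ∈
        convexHull ℝ ((Q : Set (EuclideanSpace ℝ (Fin d))) ∪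
          (P₂ : Set (EuclideanSpace ℝ (Fin d)))) := by
  set K := (Submodule.span ℝ {v})ᗮ with hK
  set f : EuclideanSpace ℝ (Fin d) →ₗ[ℝ] EuclideanSpace ℝ (Fin d) :=
    K.subtype ∘ₗ (Submodule.orthogonalProjectionOnto K : EuclideanSpace ℝ (Fin d) →ₗ[ℝ] K) with hf
  have hQ' : (0 : EuclideanSpace ℝ (Fin d)) ∈
      convexHull ℝ (f '' (Q : Set (EuclideanSpace ℝ (Fin d)))) := hQ
  rw [← f.image_convexHull] at hQ'
  obtain ⟨x, hxQ, hfx⟩ := hQ'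
  have hproj : Submodule.orthogonalProjectionOnto K x = 0 := by
    have : (Submodule.orthogonalProjectionOnto K x : EuclideanSpace ℝ (Fin d)) = 0 := hfx
    exact_mod_cast this
  have hxK : x ∈ Submodule.span ℝ {v} := by
    have hx' : x ∈ Kᗮ := Submodule.orthogonalProjectionOnto_eq_zero_iff.1 hproj
    rwa [hK, Submodule.orthogonal_orthogonal] at hx'
  obtain ⟨t, ht⟩ := Submodule.mem_span_singleton.1 hxK
  rcases le_total t 0 with htle | htle
  · left
    refine aux_combine Q P₁ (neg_nonneg.2 htle) hxQ hv₁ ?_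
    rw [← ht, neg_smul, add_neg_cancel]
  · right
    refine aux_combine Q P₂ htle hxQ hv₂ ?_
    rw [← ht, smul_neg, add_neg_cancel]
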